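/- Let p_t(x,y) = (2πt)^{-1/2} exp(-(x-y)²/(2t)) be the Gaussian heat kernel, let z_j = j-1 for 1 ≤ j ≤ N, and fix y_1 < ⋯ < y_N and S > 0. Define q_{S,T}(x;y;z) = det(p_S(y_j,x_k))_{j,k=1}^N det(p_T(x_j,z_k))_{j,k=1}^N / det(p_{S+T}(y_j,z_k))_{j,k=1}^N. Then for every x ∈ ℝ^N, lim_{T→∞} q_{S,T}(x;y;z) = (2πS)^{-N/2} · (Δ_N(x)/Δ_N(y)) · det(e^{-(x_j-y_k)²/(2S)})_{j,k=1}^N, where Δ_N(x) = ∏_{1≤i<j≤N} (x_i - x_j) is the Vandermonde determinant. -/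

import Mathlib

open scoped Real
open Filter

/-- Gaussian heat kernel. -/
noncomputable def heatKernel (t x y : ℝ) : ℝ :=
  (2 * π * t) ^ (-(1 : ℝ)/2) * Real.exp (-(x - y)^2 / (2 * t))

/-- Vandermonde product `∏_{i<j} (x_i - x_j)`. -/
noncomputable def vdm {N : ℕ} (x : Fin N → ℝ) : ℝ :=
  ∏ i : Fin N, ∏ j ∈ Finset.Ioi i, (x i - x j)

lemma aux_exp_slope (a : ℝ) :
    Tendsto (fun T : ℝ => T * (Real.exp (a / T) - 1)) atTop (nhds a) := by
  rcases eq_or_ne a 0 with rfl | ha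
  · simpa using tendsto_const_nhds (x := (0:ℝ)) (f := atTop)
  · have hslope : Tendsto (fun u : ℝ => (Real.exp u - 1) / u) (nhdsWithin 0 {0}ᶜ) (nhds 1) := by
      have h := (Real.hasDerivAt_exp 0)
      rw [hasDerivAt_iff_tendsto_slope] at h
      simpa [slope_fun_def, Real.exp_zero, div_eq_mul_inv, mul_comm] using h
    have hdiv : Tendsto (fun T : ℝ => a / T) atTop (nhdsWithin 0 {0}ᶜ) := by
      rw [tendsto_nhdsWithin_iff]
      constructor
      · exact tendsto_const_nhds.div_atTop tendsto_id
      · filter_upwards [eventually_gt_atTop 0] with T hT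
        exact Set.mem_compl_singleton_iff.mpr (div_ne_zero ha hT.ne')
    have h2 : Tendsto (fun T : ℝ => a * ((Real.exp (a / T) - 1) / (a / T))) atTop (nhds (a * 1)) :=
      (hslope.comp hdiv).const_mul a
    rw [mul_one] at h2
    refine h2.congr' ?_
    filter_upwards [eventually_gt_atTop 0] with T hT
    field_simp

lemma aux_exp_diff (a b : ℝ) :
    Tendsto (fun T : ℝ => T * (Real.exp (a / T) - Real.exp (b / T))) atTop (nhds (a - b)) := by
  have h := (aux_exp_slope a).sub (aux_exp_slope b)
  refine h.congr (fun T => by ring)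

lemma aux_shift {f : ℝ → ℝ} {l : ℝ} (S : ℝ) (h : Tendsto f atTop (nhds l)) :
    Tendsto (fun T : ℝ => f (S + T)) atTop (nhds l) :=
  h.comp (tendsto_atTop_add_const_left atTop S tendsto_id)

lemma aux_ratio_ST (S : ℝ) : Tendsto (fun T : ℝ => (S + T) / T) atTop (nhds 1) := by
  have h : Tendsto (fun T : ℝ => S / T + 1) atTop (nhds (0 + 1)) :=
    (tendsto_const_nhds.div_atTop tendsto_id).add tendsto_const_nhds
  rw [zero_add] at h
  refine h.congr' ?_
  filter_upwards [eventually_gt_atTop 0] with T hT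
  field_simp

lemma aux_pair (S : ℝ) (a b c d : ℝ) (hcd : c ≠ d) :
    Tendsto (fun T : ℝ => (Real.exp (a / T) - Real.exp (b / T)) /
        (Real.exp (c / (S + T)) - Real.exp (d / (S + T)))) atTop (nhds ((a - b) / (c - d))) := by
  have hnum := aux_exp_diff a b
  have hden : Tendsto (fun T : ℝ => (S + T) * (Real.exp (c / (S + T)) - Real.exp (d / (S + T))))
      atTop (nhds (c - d)) := aux_shift S (aux_exp_diff c d)
  have h := (hnum.div hden (sub_ne_zero.mpr hcd)).mul (aux_ratio_ST S)
  rw [mul_one] at h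
  refine h.congr' ?_
  filter_upwards [eventually_gt_atTop 0, eventually_gt_atTop (-S)] with T hT hT2
  have hT' : T ≠ 0 := hT.ne'
  have hST : S + T ≠ 0 := by linarith
  have hd : Real.exp (c / (S + T)) - Real.exp (d / (S + T)) ≠ 0 := by
    refine sub_ne_zero.mpr fun h => hcd ?_
    rw [Real.exp_eq_exp] at h
    field_simp [hST] at h
    exact h
  simp only [Pi.div_apply]
  field_simp

lemma aux_exp_one (c : ℝ) : Tendsto (fun T : ℝ => Real.exp (c / T)) atTop (nhds 1) := by
  have : Tendsto (fun T : ℝ => c / T) atTop (nhds 0) := tendsto_const_nhds.div_atTop tendsto_id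
  simpa [Function.comp_def] using (Real.continuous_exp.continuousAt (x := 0)).tendsto.comp this

lemma aux_pow_ratio (S : ℝ) (hS : 0 < S) :
    Tendsto (fun T : ℝ => (2 * π * T) ^ (-(1:ℝ)/2) / (2 * π * (S + T)) ^ (-(1:ℝ)/2))
      atTop (nhds 1) := by
  have h : Tendsto (fun T : ℝ => ((S + T) / T) ^ ((1:ℝ)/2)) atTop (nhds 1) := by
    have := (aux_ratio_ST S).rpow_const (p := (1:ℝ)/2) (Or.inl one_ne_zero)
    simpa using this
  refine h.congr' ?_
  filter_upwards [eventually_gt_atTop 0] with T hT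
  have ha : (0:ℝ) < 2 * π * T := by positivity
  have hb : (0:ℝ) < 2 * π * (S + T) := by positivity
  rw [neg_div, Real.rpow_neg ha.le, Real.rpow_neg hb.le, inv_div_inv,
    ← Real.div_rpow hb.le ha.le]
  congr 1
  rw [mul_div_mul_left _ _ (by positivity : (2*π:ℝ) ≠ 0)]

lemma det_heat {N : ℕ} (t : ℝ) (ht : 0 < t) (u : Fin N → ℝ) :
    Matrix.det (Matrix.of fun j k : Fin N => heatKernel t (u j) (k : ℝ)) =
      (∏ j : Fin N, ((2 * π * t) ^ (-(1:ℝ)/2) * Real.exp (-(u j)^2 / (2 * t)))) *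
      ((∏ k : Fin N, Real.exp (-((k : Fin N) : ℝ)^2 / (2 * t))) *
       ∏ i : Fin N, ∏ j ∈ Finset.Ioi i, (Real.exp (u j / t) - Real.exp (u i / t))) := by
  have hM : (Matrix.of fun j k : Fin N => heatKernel t (u j) (k : ℝ)) =
      Matrix.of fun j k : Fin N =>
        ((2 * π * t) ^ (-(1:ℝ)/2) * Real.exp (-(u j)^2 / (2 * t))) *
        (Real.exp (-((k : Fin N) : ℝ)^2 / (2 * t)) *
          Matrix.vandermonde (fun j => Real.exp (u j / t)) j k) := by
    ext j k
    simp only [Matrix.of_apply, heatKernel, Matrix.vandermonde_apply]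
    rw [← Real.exp_nat_mul, mul_assoc, ← Real.exp_add, mul_assoc, ← Real.exp_add]
    congr 1
    have : ((k : Fin N) : ℝ) = ((k : ℕ) : ℝ) := rfl
    rw [this]
    field_simp
    ring
  rw [hM]
  rw [show (Matrix.of fun j k : Fin N =>
        ((2 * π * t) ^ (-(1:ℝ)/2) * Real.exp (-(u j)^2 / (2 * t))) *
        (Real.exp (-((k : Fin N) : ℝ)^2 / (2 * t)) *
          Matrix.vandermonde (fun j => Real.exp (u j / t)) j k)) =
      Matrix.of (fun j k : Fin N =>
        ((2 * π * t) ^ (-(1:ℝ)/2) * Real.exp (-(u j)^2 / (2 * t))) *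
        (Matrix.of fun j k : Fin N => Real.exp (-((k : Fin N) : ℝ)^2 / (2 * t)) *
          Matrix.vandermonde (fun j => Real.exp (u j / t)) j k) j k) from rfl,
    Matrix.det_mul_column, Matrix.det_mul_row, Matrix.det_vandermonde]

lemma det_heat_S {N : ℕ} (S : ℝ) (hS : 0 < S) (y x : Fin N → ℝ) :
    Matrix.det (Matrix.of fun j k : Fin N => heatKernel S (y j) (x k)) =
      (2 * π * S) ^ (-(N : ℝ)/2) *
        Matrix.det (Matrix.of fun j k : Fin N => Real.exp (-(x j - y k)^2 / (2 * S))) := by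
  have h2πS : (0:ℝ) < 2 * π * S := by positivity
  have h1 : (Matrix.of fun j k : Fin N => heatKernel S (y j) (x k)) =
      Matrix.of (fun j k : Fin N => (fun _ : Fin N => (2 * π * S) ^ (-(1:ℝ)/2)) j *
        (Matrix.of fun j k : Fin N => Real.exp (-(y j - x k)^2 / (2 * S))) j k) := rfl
  rw [h1, Matrix.det_mul_column, Finset.prod_const, Finset.card_univ, Fintype.card_fin]
  congr 1
  · rw [← Real.rpow_natCast ((2 * π * S) ^ (-(1:ℝ)/2)) N, ← Real.rpow_mul h2πS.le]
    congr 1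
    push_cast
    ring
  · rw [← Matrix.det_transpose (Matrix.of fun j k : Fin N => Real.exp (-(x j - y k)^2 / (2 * S)))]
    congr 1
    ext j k
    simp only [Matrix.transpose_apply, Matrix.of_apply]
    congr 1
    ring

/-- Limit of the conditional non-intersecting Brownian motion density as `T → ∞`. -/
theorem tendsto_qST {N : ℕ} (hN : 1 ≤ N) (S : ℝ) (hS : 0 < S)
    (y : Fin N → ℝ) (hy : StrictMono y) (x : Fin N → ℝ) :
    Filter.Tendsto (fun T : ℝ =>
        (Matrix.det (Matrix.of fun j k => heatKernel S (y j) (x k)) *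
         Matrix.det (Matrix.of fun j k => heatKernel T (x j) (k : ℝ))) /
        Matrix.det (Matrix.of fun j k => heatKernel (S + T) (y j) (k : ℝ)))
      Filter.atTop
      (nhds ((2 * π * S) ^ (-(N : ℝ)/2) * (vdm x / vdm y) *
        Matrix.det (Matrix.of fun j k => Real.exp (-(x j - y k)^2 / (2 * S))))) := by
  -- component ratio functions
  set CS := Matrix.det (Matrix.of fun j k : Fin N => heatKernel S (y j) (x k)) with hCS
  -- row ratios
  have hA : ∀ j : Fin N, Tendsto (fun T : ℝ =>
      ((2 * π * T) ^ (-(1:ℝ)/2) * Real.exp (-(x j)^2 / (2 * T))) /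
      ((2 * π * (S + T)) ^ (-(1:ℝ)/2) * Real.exp (-(y j)^2 / (2 * (S + T)))))
      atTop (nhds 1) := by
    intro j
    have e1 : Tendsto (fun T : ℝ => Real.exp (-(x j)^2 / (2 * T))) atTop (nhds 1) := by
      have := aux_exp_one (-(x j)^2 / 2)
      refine this.congr fun T => by rw [div_div]
    have e2 : Tendsto (fun T : ℝ => Real.exp (-(y j)^2 / (2 * (S + T)))) atTop (nhds 1) := by
      refine aux_shift (f := fun T : ℝ => Real.exp (-(y j)^2 / (2 * T))) S ?_
      exact (aux_exp_one (-(y j)^2 / 2)).congr fun T => by rw [div_div]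
    have h := (aux_pow_ratio S hS).mul (e1.div e2 one_ne_zero)
    rw [show (1:ℝ) * (1/1) = 1 by norm_num] at h
    refine h.congr fun T => by simp only [Pi.div_apply]; rw [div_mul_div_comm]
  -- column ratios
  have hB : ∀ k : Fin N, Tendsto (fun T : ℝ =>
      Real.exp (-((k : Fin N) : ℝ)^2 / (2 * T)) /
      Real.exp (-((k : Fin N) : ℝ)^2 / (2 * (S + T)))) atTop (nhds 1) := by
    intro k
    have e1 : Tendsto (fun T : ℝ => Real.exp (-((k : Fin N) : ℝ)^2 / (2 * T))) atTop (nhds 1) := by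
      have := aux_exp_one (-((k : Fin N) : ℝ)^2 / 2)
      refine this.congr fun T => by rw [div_div]
    have e2 : Tendsto (fun T : ℝ => Real.exp (-((k : Fin N) : ℝ)^2 / (2 * (S + T))))
        atTop (nhds 1) := by
      refine aux_shift (f := fun T : ℝ => Real.exp (-((k : Fin N) : ℝ)^2 / (2 * T))) S ?_
      exact (aux_exp_one (-((k : Fin N) : ℝ)^2 / 2)).congr fun T => by rw [div_div]
    have h := e1.div e2 one_ne_zero
    rw [div_one] at h
    exact h
  -- pair ratios
  have hC : ∀ i : Fin N, ∀ j ∈ Finset.Ioi i, Tendsto (fun T : ℝ =>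
      (Real.exp (x j / T) - Real.exp (x i / T)) /
      (Real.exp (y j / (S + T)) - Real.exp (y i / (S + T)))) atTop
      (nhds ((x i - x j) / (y i - y j))) := by
    intro i j hj
    have hij : i < j := Finset.mem_Ioi.mp hj
    have hne : y j ≠ y i := (hy hij).ne'
    have h := aux_pair S (x j) (x i) (y j) (y i) hne
    rw [show (x j - x i) / (y j - y i) = (x i - x j) / (y i - y j) by
      rw [← neg_sub (x i), ← neg_sub (y i), neg_div_neg_eq]] at h
    exact h
  -- product limits
  have h1 := tendsto_finset_prod (f := fun (j : Fin N) (T : ℝ) =>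
      ((2 * π * T) ^ (-(1:ℝ)/2) * Real.exp (-(x j)^2 / (2 * T))) /
      ((2 * π * (S + T)) ^ (-(1:ℝ)/2) * Real.exp (-(y j)^2 / (2 * (S + T)))))
      (x := atTop) (a := fun _ => 1) Finset.univ (fun j _ => hA j)
  have h2 := tendsto_finset_prod (f := fun (k : Fin N) (T : ℝ) =>
      Real.exp (-((k : Fin N) : ℝ)^2 / (2 * T)) /
      Real.exp (-((k : Fin N) : ℝ)^2 / (2 * (S + T))))
      (x := atTop) (a := fun _ => 1) Finset.univ (fun k _ => hB k)
  have h3 : Tendsto (fun T : ℝ => ∏ i : Fin N, ∏ j ∈ Finset.Ioi i,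
      ((Real.exp (x j / T) - Real.exp (x i / T)) /
       (Real.exp (y j / (S + T)) - Real.exp (y i / (S + T)))))
      atTop (nhds (∏ i : Fin N, ∏ j ∈ Finset.Ioi i, ((x i - x j) / (y i - y j)))) := by
    refine tendsto_finset_prod _ fun i _ => ?_
    exact tendsto_finset_prod _ fun j hj => hC i j hj
  have hratio := h1.mul (h2.mul h3)
  -- identify the limit value
  have hval : (∏ _j : Fin N, (1:ℝ)) * ((∏ _k : Fin N, (1:ℝ)) *
      ∏ i : Fin N, ∏ j ∈ Finset.Ioi i, ((x i - x j) / (y i - y j))) = vdm x / vdm y := by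
    simp only [Finset.prod_const_one, one_mul, vdm]
    rw [← Finset.prod_div_distrib]
    exact Finset.prod_congr rfl fun i _ => Finset.prod_div_distrib _ _
  rw [hval] at hratio
  -- the det quotient agrees eventually with the product form
  have hR : Tendsto (fun T : ℝ =>
      Matrix.det (Matrix.of fun j k : Fin N => heatKernel T (x j) (k : ℝ)) /
      Matrix.det (Matrix.of fun j k : Fin N => heatKernel (S + T) (y j) (k : ℝ)))
      atTop (nhds (vdm x / vdm y)) := by
    refine hratio.congr' ?_
    filter_upwards [eventually_gt_atTop 0] with T hT
    have hST : (0:ℝ) < S + T := by linarith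
    rw [det_heat T hT x, det_heat (S + T) hST y,
      Finset.prod_div_distrib, Finset.prod_div_distrib,
      show (∏ i : Fin N, ∏ j ∈ Finset.Ioi i,
          ((Real.exp (x j / T) - Real.exp (x i / T)) /
           (Real.exp (y j / (S + T)) - Real.exp (y i / (S + T))))) =
        (∏ i : Fin N, ∏ j ∈ Finset.Ioi i, (Real.exp (x j / T) - Real.exp (x i / T))) /
        (∏ i : Fin N, ∏ j ∈ Finset.Ioi i,
          (Real.exp (y j / (S + T)) - Real.exp (y i / (S + T)))) from by
        rw [← Finset.prod_div_distrib]
        exact Finset.prod_congr rfl fun i _ => Finset.prod_div_distrib _ _,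
      div_mul_div_comm, div_mul_div_comm]
  -- assemble
  have hfinal := hR.const_mul CS
  have heq : (fun T : ℝ =>
      (CS * Matrix.det (Matrix.of fun j k : Fin N => heatKernel T (x j) (k : ℝ))) /
      Matrix.det (Matrix.of fun j k : Fin N => heatKernel (S + T) (y j) (k : ℝ))) =
      fun T : ℝ => CS *
      (Matrix.det (Matrix.of fun j k : Fin N => heatKernel T (x j) (k : ℝ)) /
       Matrix.det (Matrix.of fun j k : Fin N => heatKernel (S + T) (y j) (k : ℝ))) := by
    funext T; rw [mul_div_assoc]
  rw [← heq] at hfinal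
  have hCSval := det_heat_S S hS y x
  rw [show CS * (vdm x / vdm y) = (2 * π * S) ^ (-(N : ℝ)/2) * (vdm x / vdm y) *
      Matrix.det (Matrix.of fun j k : Fin N => Real.exp (-(x j - y k)^2 / (2 * S))) from by
    rw [hCS, hCSval]; ring] at hfinal
  exact hfinal
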